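/- There exists c₀ with c̃ < c₀ < b such that: (a) there is a unique R₀ > 0 with θ_{c₀}(R₀) = θ_hl, and this R₀ satisfies θ_{c₀}'(R₀) = 0 and c₀·θ_hl = q·R₀; (b) for every c with c₀ < c < b there exist exactly two values 0 < R₁ < R₂ with θ_c(R₁) = θ_c(R₂) = θ_hl, and they satisfy θ_c'(R₁) > 0 and θ_c'(R₂) < 0. -/

import Mathlib

open Set Filter

noncomputable def theta (q θig c x : ℝ) : ℝ :=
  θig * Real.exp (c * x) + (q / c) * x + (q / c ^ 2) * (1 - Real.exp (c * x))

namespace Stmt3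

noncomputable def xstar (q θig c : ℝ) : ℝ := Real.log (q / (q - c ^ 2 * θig)) / c

noncomputable def Mc (q θig c : ℝ) : ℝ := q / c ^ 2 * Real.log (q / (q - c ^ 2 * θig))

lemma theta_cont (q θig c : ℝ) : Continuous (theta q θig c) := by
  unfold theta; fun_prop

lemma theta_zero (q θig c : ℝ) : theta q θig c 0 = θig := by
  simp [theta]

lemma theta_hasDerivAt (q θig : ℝ) {c : ℝ} (hc : c ≠ 0) (x : ℝ) :
    HasDerivAt (theta q θig c) ((c * θig - q / c) * Real.exp (c * x) + q / c) x := by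
  have h1 : HasDerivAt (fun x : ℝ => c * x) c x := by
    simpa using (hasDerivAt_id x).const_mul c
  have hexp : HasDerivAt (fun x : ℝ => Real.exp (c * x)) (Real.exp (c * x) * c) x :=
    (Real.hasDerivAt_exp (c * x)).comp x h1
  have h := ((hexp.const_mul θig).add ((hasDerivAt_id x).const_mul (q / c))).add
    (((hasDerivAt_const x (1:ℝ)).sub hexp).const_mul (q / c ^ 2))
  have e : θig * (Real.exp (c * x) * c) + q / c * 1 + q / c ^ 2 * (0 - Real.exp (c * x) * c)
      = (c * θig - q / c) * Real.exp (c * x) + q / c := by field_simp; ring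
  rw [← e]
  exact h

lemma deriv_theta (q θig : ℝ) {c : ℝ} (hc : c ≠ 0) (x : ℝ) :
    deriv (theta q θig c) x = (c * θig - q / c) * Real.exp (c * x) + q / c :=
  (theta_hasDerivAt q θig hc x).deriv

section PerC

variable {q θig c : ℝ} (hq : 0 < q) (hθ : 0 < θig) (hc : 0 < c) (hlt : c ^ 2 * θig < q)

include hq hθ hc hlt

lemma hden : 0 < q - c ^ 2 * θig := by linarith

lemma hE : 1 < q / (q - c ^ 2 * θig) := by
  rw [lt_div_iff₀ (hden hq hθ hc hlt)]
  nlinarith [pow_pos hc 2]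

lemma xstar_pos : 0 < xstar q θig c :=
  div_pos (Real.log_pos (hE hq hθ hc hlt)) hc

lemma exp_c_xstar : Real.exp (c * xstar q θig c) = q / (q - c ^ 2 * θig) := by
  rw [xstar, mul_div_cancel₀ _ hc.ne', Real.exp_log (div_pos hq (hden hq hθ hc hlt))]

lemma deriv_theta' (x : ℝ) :
    deriv (theta q θig c) x
      = ((c ^ 2 * θig - q) / c) * (Real.exp (c * x) - Real.exp (c * xstar q θig c)) := by
  rw [deriv_theta q θig hc.ne', exp_c_xstar hq hθ hc hlt]
  have h0 : q - c ^ 2 * θig ≠ 0 := (hden hq hθ hc hlt).ne'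
  field_simp
  ring

lemma coef_neg : (c ^ 2 * θig - q) / c < 0 :=
  div_neg_of_neg_of_pos (by linarith) hc

lemma deriv_pos {x : ℝ} (hx : x < xstar q θig c) : 0 < deriv (theta q θig c) x := by
  rw [deriv_theta' hq hθ hc hlt]
  exact mul_pos_of_neg_of_neg (coef_neg hq hθ hc hlt)
    (by simp only [sub_neg]; exact Real.exp_lt_exp.2 (by nlinarith))

lemma deriv_neg {x : ℝ} (hx : xstar q θig c < x) : deriv (theta q θig c) x < 0 := by
  rw [deriv_theta' hq hθ hc hlt]
  exact mul_neg_of_neg_of_pos (coef_neg hq hθ hc hlt)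
    (by simp only [sub_pos]; exact Real.exp_lt_exp.2 (by nlinarith))

lemma deriv_xstar : deriv (theta q θig c) (xstar q θig c) = 0 := by
  rw [deriv_theta' hq hθ hc hlt]; simp

lemma theta_xstar : theta q θig c (xstar q θig c) = Mc q θig c := by
  have h0 : q - c ^ 2 * θig ≠ 0 := (hden hq hθ hc hlt).ne'
  rw [theta, exp_c_xstar hq hθ hc hlt, Mc, xstar]
  generalize Real.log (q / (q - c ^ 2 * θig)) = L
  field_simp
  have h0' : -(θig * c ^ 2) + q ≠ 0 := by intro h; apply h0; linarith
  have key : θig * c ^ 2 * (-(θig * c ^ 2) + q)⁻¹ - q * (-(θig * c ^ 2) + q)⁻¹ = -1 := by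
    field_simp; ring
  ring_nf at key ⊢
  linarith

lemma theta_mono : StrictMonoOn (theta q θig c) (Iic (xstar q θig c)) := by
  apply strictMonoOn_of_deriv_pos (convex_Iic _) (theta_cont q θig c).continuousOn
  intro x hx
  rw [interior_Iic] at hx
  exact deriv_pos hq hθ hc hlt hx

lemma theta_anti : StrictAntiOn (theta q θig c) (Ici (xstar q θig c)) := by
  apply strictAntiOn_of_deriv_neg (convex_Ici _) (theta_cont q θig c).continuousOn
  intro x hx
  rw [interior_Ici] at hx
  exact deriv_neg hq hθ hc hlt hx

lemma theta_tendsto : Tendsto (theta q θig c) atTop atBot := by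
  have hA : θig - q / c ^ 2 < 0 := by
    rw [sub_neg, lt_div_iff₀ (pow_pos hc 2)]; nlinarith
  have hcx : Tendsto (fun x : ℝ => c * x) atTop atTop :=
    tendsto_id.const_mul_atTop hc
  have hexp : Tendsto (fun x : ℝ => Real.exp (c * x)) atTop atTop :=
    Real.tendsto_exp_atTop.comp hcx
  have h1 : Tendsto (fun x : ℝ => (c * x) * Real.exp (-(c * x))) atTop (nhds 0) := by
    have := (Real.tendsto_pow_mul_exp_neg_atTop_nhds_zero 1).comp hcx
    simpa [Function.comp_def] using this
  have h2 : Tendsto (fun x : ℝ => Real.exp (-(c * x))) atTop (nhds 0) := by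
    have := (Real.tendsto_pow_mul_exp_neg_atTop_nhds_zero 0).comp hcx
    simpa [Function.comp_def] using this
  have hbr : Tendsto
      (fun x : ℝ => (θig - q / c ^ 2) + (q / c ^ 2) * ((c * x) * Real.exp (-(c * x)))
        + (q / c ^ 2) * Real.exp (-(c * x))) atTop (nhds (θig - q / c ^ 2)) := by
    have := ((tendsto_const_nhds (x := θig - q / c ^ 2)).add
      ((h1.const_mul (q / c ^ 2)))).add (h2.const_mul (q / c ^ 2))
    simpa using this
  have := hexp.atTop_mul_neg hA hbr
  refine this.congr fun x => ?_
  have hec : Real.exp (c * x) * Real.exp (-(c * x)) = 1 := by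
    rw [← Real.exp_add]; simp
  have hc2 : (c:ℝ) ^ 2 ≠ 0 := (pow_pos hc 2).ne'
  rw [theta]
  field_simp
  linear_combination (c * q * x + q) * hec

end PerC

lemma f_hasDerivAt {t : ℝ} (ht : t ∈ Ioo (0:ℝ) 1) :
    HasDerivAt (fun t : ℝ => -Real.log (1 - t) / t)
      (((1 - t)⁻¹ * t - -Real.log (1 - t) * 1) / t ^ 2) t := by
  obtain ⟨ht0, ht1⟩ := ht
  have hu : (0:ℝ) < 1 - t := by linarith
  have hder : HasDerivAt (fun t : ℝ => -Real.log (1 - t)) (1 - t)⁻¹ t := by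
    have hs : HasDerivAt (fun t : ℝ => 1 - t) (-1) t := by
      simpa using (hasDerivAt_id' t).const_sub (1:ℝ)
    have h2 := ((Real.hasDerivAt_log hu.ne').comp t hs).neg
    have e : -((1 - t)⁻¹ * -1) = (1 - t)⁻¹ := by ring
    rw [← e]
    exact h2
  exact hder.div (hasDerivAt_id t) ht0.ne'

lemma f_deriv_pos {t : ℝ} (ht : t ∈ Ioo (0:ℝ) 1) :
    0 < ((1 - t)⁻¹ * t - -Real.log (1 - t) * 1) / t ^ 2 := by
  obtain ⟨ht0, ht1⟩ := ht
  have hu : (0:ℝ) < 1 - t := by linarith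
  have hne : (1 - t)⁻¹ ≠ 1 := by
    intro h
    have : (1:ℝ) - t = 1 := by
      field_simp at h
      linarith
    linarith
  have hlog : Real.log (1 - t)⁻¹ < (1 - t)⁻¹ - 1 :=
    Real.log_lt_sub_one_of_pos (inv_pos.2 hu) hne
  rw [Real.log_inv] at hlog
  have hinv : (1 - t)⁻¹ * (1 - t) = 1 := inv_mul_cancel₀ hu.ne'
  apply div_pos _ (pow_pos ht0 2)
  nlinarith [inv_pos.2 hu]

lemma f_mono : StrictMonoOn (fun t : ℝ => -Real.log (1 - t) / t) (Ioo (0:ℝ) 1) := by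
  apply strictMonoOn_of_deriv_pos (convex_Ioo 0 1)
  · intro t ht
    obtain ⟨ht0, ht1⟩ := ht
    have hu : (1:ℝ) - t ≠ 0 := by intro h; linarith [h]
    exact ContinuousAt.continuousWithinAt
      (((Real.continuousAt_log hu).comp
        ((continuous_const.sub continuous_id).continuousAt)).neg.div
        continuousAt_id ht0.ne')
  · intro t ht
    rw [interior_Ioo] at ht
    rw [(f_hasDerivAt ht).deriv]
    exact f_deriv_pos ht

lemma Mc_eq {q θig c : ℝ} (hq : 0 < q) (hθ : 0 < θig) (hc : 0 < c) (hlt : c ^ 2 * θig < q) :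
    Mc q θig c = θig * (-Real.log (1 - c ^ 2 * θig / q) / (c ^ 2 * θig / q)) := by
  have hden : (0:ℝ) < q - c ^ 2 * θig := by linarith
  have e1 : 1 - c ^ 2 * θig / q = (q - c ^ 2 * θig) / q := by field_simp
  have e2 : -Real.log ((q - c ^ 2 * θig) / q) = Real.log (q / (q - c ^ 2 * θig)) := by
    rw [← Real.log_inv, inv_div]
  rw [Mc, e1, e2]
  have hc2 : (c:ℝ) ^ 2 ≠ 0 := (pow_pos hc 2).ne'
  field_simp

lemma t_mem {q θig c : ℝ} (hq : 0 < q) (hθ : 0 < θig) (hc : 0 < c) (hlt : c ^ 2 * θig < q) :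
    c ^ 2 * θig / q ∈ Ioo (0:ℝ) 1 :=
  ⟨by positivity, (div_lt_one hq).2 hlt⟩

lemma Mc_mono {q θig c₁ c₂ : ℝ} (hq : 0 < q) (hθ : 0 < θig) (hc1 : 0 < c₁)
    (h12 : c₁ < c₂) (hlt2 : c₂ ^ 2 * θig < q) : Mc q θig c₁ < Mc q θig c₂ := by
  have hc2 : 0 < c₂ := hc1.trans h12
  have hsq : c₁ ^ 2 < c₂ ^ 2 := by nlinarith
  have hlt1 : c₁ ^ 2 * θig < q := by nlinarith
  rw [Mc_eq hq hθ hc1 hlt1, Mc_eq hq hθ hc2 hlt2]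
  have ht12 : c₁ ^ 2 * θig / q < c₂ ^ 2 * θig / q := by
    have : c₁ ^ 2 * θig < c₂ ^ 2 * θig := by nlinarith
    exact div_lt_div_of_pos_right this hq
  exact mul_lt_mul_of_pos_left
    (f_mono (t_mem hq hθ hc1 hlt1) (t_mem hq hθ hc2 hlt2) ht12) hθ

end Stmt3

open Stmt3 in
set_option maxHeartbeats 1000000 in
theorem stmt3 (q θig θhl : ℝ) (hq : 0 < q) (h1 : 0 < θig) (h2 : θig < θhl) :
    ∃ c₀ : ℝ,
      Real.sqrt (q * (θhl - θig) / (θhl * θig)) < c₀ ∧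
      c₀ < Real.sqrt (q / θig) ∧
      (∃ R₀ : ℝ, 0 < R₀ ∧ theta q θig c₀ R₀ = θhl ∧
        deriv (theta q θig c₀) R₀ = 0 ∧ c₀ * θhl = q * R₀ ∧
        (∀ R : ℝ, 0 < R → theta q θig c₀ R = θhl → R = R₀)) ∧
      (∀ c : ℝ, c₀ < c → c < Real.sqrt (q / θig) →
        ∃ R₁ R₂ : ℝ, 0 < R₁ ∧ R₁ < R₂ ∧
          theta q θig c R₁ = θhl ∧ theta q θig c R₂ = θhl ∧
          0 < deriv (theta q θig c) R₁ ∧ deriv (theta q θig c) R₂ < 0 ∧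
          (∀ R : ℝ, 0 < R → theta q θig c R = θhl → R = R₁ ∨ R = R₂)) := by
  have hθhl : 0 < θhl := h1.trans h2
  have hθhl' : θhl ≠ 0 := hθhl.ne'
  have h1' : θig ≠ 0 := h1.ne'
  have hq' : q ≠ 0 := hq.ne'
  have hsub : 0 < θhl - θig := by linarith
  obtain ⟨s, hs⟩ : ∃ s : ℝ, s = θhl / θig := ⟨_, rfl⟩
  have hspos : 0 < s := hs ▸ div_pos hθhl h1
  have hs1 : 1 < s := hs ▸ (one_lt_div h1).2 h2
  -- c-tilde
  obtain ⟨ct, hctdef⟩ : ∃ ct : ℝ, ct = Real.sqrt (q * (θhl - θig) / (θhl * θig)) := ⟨_, rfl⟩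
  have harg : 0 < q * (θhl - θig) / (θhl * θig) :=
    div_pos (mul_pos hq hsub) (mul_pos hθhl h1)
  have hctpos : 0 < ct := hctdef ▸ Real.sqrt_pos.2 harg
  have hct2 : ct ^ 2 = q * (θhl - θig) / (θhl * θig) := by rw [hctdef]; exact Real.sq_sqrt harg.le
  have e0 : ct ^ 2 * θig = q * (θhl - θig) / θhl := by
    rw [hct2]; field_simp
  have hctlt : ct ^ 2 * θig < q := by
    rw [e0, div_lt_iff₀ hθhl]; nlinarith
  have e1 : q - ct ^ 2 * θig = q * θig / θhl := by
    rw [e0]; field_simp; ring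
  have hlogs : Real.log s < s - 1 := Real.log_lt_sub_one_of_pos hspos hs1.ne'
  have hMcCt : Mc q θig ct < θhl := by
    have e2a : q / (q * θig / θhl) = s := by rw [hs]; field_simp
    have e2b : q / ct ^ 2 = θhl * θig / (θhl - θig) := by
      rw [hct2]; field_simp
    rw [Mc, e1, e2a, e2b]
    have hpos : 0 < θhl * θig / (θhl - θig) := div_pos (mul_pos hθhl h1) hsub
    calc θhl * θig / (θhl - θig) * Real.log s
        < θhl * θig / (θhl - θig) * (s - 1) := by
          exact mul_lt_mul_of_pos_left hlogs hpos
      _ = θhl := by rw [hs]; field_simp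
  -- c'
  obtain ⟨t', ht'def⟩ : ∃ t' : ℝ, t' = 1 - Real.exp (-s) := ⟨_, rfl⟩
  have ht'0 : 0 < t' := by
    have : Real.exp (-s) < 1 := Real.exp_lt_one_iff.2 (by linarith)
    rw [ht'def]; linarith
  have ht'1 : t' < 1 := by
    have := Real.exp_pos (-s); rw [ht'def]; linarith
  obtain ⟨c', hc'def⟩ : ∃ c' : ℝ, c' = Real.sqrt (q * t' / θig) := ⟨_, rfl⟩
  have harg' : 0 < q * t' / θig := div_pos (mul_pos hq ht'0) h1
  have hc'pos : 0 < c' := hc'def ▸ Real.sqrt_pos.2 harg'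
  have hc'2 : c' ^ 2 = q * t' / θig := by rw [hc'def]; exact Real.sq_sqrt harg'.le
  have e3 : c' ^ 2 * θig = q * t' := by rw [hc'2]; field_simp
  have hc'lt : c' ^ 2 * θig < q := by rw [e3]; nlinarith
  have e4 : q - c' ^ 2 * θig = q * Real.exp (-s) := by rw [e3, ht'def]; ring
  have hMcc' : θhl < Mc q θig c' := by
    have e5 : q / (q * Real.exp (-s)) = Real.exp s := by
      rw [Real.exp_neg]; field_simp
    rw [Mc, e4, e5, Real.log_exp, hc'2]
    have e6 : q / (q * t' / θig) * s = θhl / t' := by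
      rw [hs]; field_simp
    rw [e6, lt_div_iff₀ ht'0]; nlinarith
  have hctc' : ct < c' := by
    rw [hctdef, hc'def]
    apply Real.sqrt_lt_sqrt harg.le
    have hes : s < Real.exp s := (lt_add_one s).trans_le (Real.add_one_le_exp s)
    have h7 : Real.exp (-s) < θig / θhl := by
      have h8 : (Real.exp s)⁻¹ < s⁻¹ := by
        have := one_div_lt_one_div_of_lt hspos hes
        rwa [one_div, one_div] at this
      rw [Real.exp_neg]
      calc (Real.exp s)⁻¹ < s⁻¹ := h8
        _ = θig / θhl := by rw [hs, inv_div]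
    have h9 : (θhl - θig) / θhl < t' := by
      have e8 : (θhl - θig) / θhl = 1 - θig / θhl := by field_simp
      rw [e8, ht'def]; linarith
    have l : q * (θhl - θig) / (θhl * θig) = q / θig * ((θhl - θig) / θhl) := by
      field_simp
    have r : q * t' / θig = q / θig * t' := by ring
    rw [l, r]
    exact mul_lt_mul_of_pos_left h9 (div_pos hq h1)
  -- continuity of Mc and IVT
  have hcont : ContinuousOn (fun c => Mc q θig c) (Icc ct c') := by
    intro x hx
    have hx0 : 0 < x := hctpos.trans_le hx.1
    have hxlt : x ^ 2 * θig < q := by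
      have hxsq : x ^ 2 ≤ c' ^ 2 := by nlinarith [hx.2, hc'pos]
      nlinarith
    have hdpos : 0 < q - x ^ 2 * θig := by linarith
    apply ContinuousAt.continuousWithinAt
    apply ContinuousAt.mul
    · exact continuousAt_const.div (by fun_prop) (pow_ne_zero 2 hx0.ne')
    · exact ContinuousAt.log (continuousAt_const.div (by fun_prop) hdpos.ne')
        (div_pos hq hdpos).ne'
  obtain ⟨c₀, hc₀mem, hMc₀⟩ :=
    intermediate_value_Ioo hctc'.le hcont ⟨hMcCt, hMcc'⟩
  replace hMc₀ : Mc q θig c₀ = θhl := hMc₀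
  have hc₀pos : 0 < c₀ := hctpos.trans hc₀mem.1
  have hc₀lt : c₀ ^ 2 * θig < q := by
    have : c₀ ^ 2 < c' ^ 2 := by nlinarith [hc₀mem.2]
    nlinarith
  have hc₀b : c₀ < Real.sqrt (q / θig) :=
    (Real.lt_sqrt hc₀pos.le).2 ((lt_div_iff₀ h1).2 hc₀lt)
  refine ⟨c₀, hctdef ▸ hc₀mem.1, hc₀b, ?_, ?_⟩
  · -- part (a)
    refine ⟨xstar q θig c₀, xstar_pos hq h1 hc₀pos hc₀lt, ?_, ?_, ?_, ?_⟩
    · rw [theta_xstar hq h1 hc₀pos hc₀lt, hMc₀]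
    · exact deriv_xstar hq h1 hc₀pos hc₀lt
    · rw [← hMc₀, Mc, xstar]
      field_simp
    · intro R hR hRθ
      rcases lt_trichotomy R (xstar q θig c₀) with h | h | h
      · exfalso
        have := theta_mono hq h1 hc₀pos hc₀lt (mem_Iic.2 h.le) (mem_Iic.2 le_rfl) h
        rw [hRθ, theta_xstar hq h1 hc₀pos hc₀lt, hMc₀] at this
        exact lt_irrefl _ this
      · exact h
      · exfalso
        have := theta_anti hq h1 hc₀pos hc₀lt (mem_Ici.2 le_rfl) (mem_Ici.2 h.le) h
        rw [hRθ, theta_xstar hq h1 hc₀pos hc₀lt, hMc₀] at this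
        exact lt_irrefl _ this
  · -- part (b)
    intro c hcc₀ hcb
    have hcpos : 0 < c := hc₀pos.trans hcc₀
    have hclt : c ^ 2 * θig < q := by
      have := (Real.lt_sqrt hcpos.le).1 hcb
      rw [lt_div_iff₀ h1] at this
      exact this
    have hMcgt : θhl < Mc q θig c := by
      rw [← hMc₀]
      exact Mc_mono hq h1 hc₀pos hcc₀ hclt
    have hxspos : 0 < xstar q θig c := xstar_pos hq h1 hcpos hclt
    have hθxs : theta q θig c (xstar q θig c) = Mc q θig c :=
      theta_xstar hq h1 hcpos hclt
    obtain ⟨R₁, hR₁mem, hR₁⟩ :=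
      intermediate_value_Ioo hxspos.le (theta_cont q θig c).continuousOn
        (show θhl ∈ Ioo (theta q θig c 0) (theta q θig c (xstar q θig c)) from
          ⟨by rw [theta_zero]; exact h2, by rw [hθxs]; exact hMcgt⟩)
    obtain ⟨X, hXlt, hXgt⟩ :=
      (((theta_tendsto hq h1 hcpos hclt).eventually (eventually_lt_atBot θhl)).and
        (eventually_gt_atTop (xstar q θig c))).exists
    obtain ⟨R₂, hR₂mem, hR₂⟩ :=
      intermediate_value_Ioo' hXgt.le (theta_cont q θig c).continuousOn
        (show θhl ∈ Ioo (theta q θig c X) (theta q θig c (xstar q θig c)) from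
          ⟨hXlt, by rw [hθxs]; exact hMcgt⟩)
    refine ⟨R₁, R₂, hR₁mem.1, hR₁mem.2.trans hR₂mem.1, hR₁, hR₂,
      deriv_pos hq h1 hcpos hclt hR₁mem.2, deriv_neg hq h1 hcpos hclt hR₂mem.1, ?_⟩
    intro R hR hRθ
    rcases lt_trichotomy R (xstar q θig c) with h | h | h
    · left
      exact (theta_mono hq h1 hcpos hclt).injOn (mem_Iic.2 h.le)
        (mem_Iic.2 hR₁mem.2.le) (by rw [hRθ, hR₁])
    · exfalso
      rw [h, hθxs] at hRθ
      exact lt_irrefl _ (hRθ ▸ hMcgt)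
    · right
      exact (theta_anti hq h1 hcpos hclt).injOn (mem_Ici.2 h.le)
        (mem_Ici.2 hR₂mem.1.le) (by rw [hRθ, hR₂])
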